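/- There is no skew-symmetric nondegenerate invariant bilinear form on the pre-Lie algebra $(W_n, \diamond)$, where $W_n = \{\sum_{i=1}^n f_i \partial_i : f_i \in \mathbf{k}[x_1^{\pm},\ldots,x_n^{\pm}]\}$ with $u\partial_i \diamond v\partial_j = u \cdot \partial_i(v)\partial_j$. In fact, any skew-symmetric invariant bilinear form $\omega$ on $W_n$ satisfies $\omega(x_1 \partial_1, W_n) = 0$. -/

import Mathlib

/-- Any skew-symmetric invariant bilinear form `ω` on the pre-Lie algebra
`(Wₙ, ⋄)` (the free `k`-module on basis `(m, i) ↔ x^m ∂ᵢ`, with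
`x^m ∂ᵢ ⋄ x^{m'} ∂ⱼ = m'ᵢ • x^{m+m'-eᵢ} ∂ⱼ`) satisfies `ω(x₁∂₁, Wₙ) = 0`; in particular
there is no skew-symmetric nondegenerate invariant bilinear form on `(Wₙ, ⋄)`. -/
theorem stmt17 {k : Type*} [Field k] [CharZero k]
    (n : ℕ) (hn : 0 < n)
    (dia : (((Fin n → ℤ) × Fin n) →₀ k) →ₗ[k] (((Fin n → ℤ) × Fin n) →₀ k) →ₗ[k]
      (((Fin n → ℤ) × Fin n) →₀ k))
    (hdia : ∀ (m m' : Fin n → ℤ) (i j : Fin n),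
      dia (Finsupp.single (m, i) 1) (Finsupp.single (m', j) 1) =
        (m' i) • Finsupp.single ((fun l => m l + m' l - if l = i then 1 else 0), j) (1 : k))
    (ω : (((Fin n → ℤ) × Fin n) →₀ k) →ₗ[k] (((Fin n → ℤ) × Fin n) →₀ k) →ₗ[k] k)
    (hskew : ∀ x y, ω x y = -ω y x)
    (hinv : ∀ x y z, ω (dia x y) z = -ω y (dia x z - dia z x)) :
    (∀ y, ω (Finsupp.single ((fun l => if l = (⟨0, hn⟩ : Fin n) then 1 else 0),
      (⟨0, hn⟩ : Fin n)) (1 : k)) y = 0) ∧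
    ¬(∀ x, (∀ y, ω x y = 0) → x = 0) := by
  set i0 : Fin n := ⟨0, hn⟩
  set e1 : Fin n → ℤ := fun l => if l = i0 then 1 else 0 with he1
  set E : ((Fin n → ℤ) × Fin n) →₀ k := Finsupp.single (e1, i0) 1 with hE
  -- dia E (single (m',j)) = m' i0 • single (m', j)
  have dEb : ∀ (m' : Fin n → ℤ) (j : Fin n),
      dia E (Finsupp.single (m', j) 1) = (m' i0) • Finsupp.single (m', j) (1 : k) := by
    intro m' j
    rw [hE, hdia]
    have h2 : (fun l => e1 l + m' l - if l = i0 then 1 else 0) = m' := by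
      funext l; simp only [he1]; by_cases h : l = i0 <;> simp [h]
    rw [h2]
  -- relation (A): m' i0 • ω (single (m',j)) E = 0
  have relA : ∀ (m' : Fin n → ℤ) (j : Fin n),
      (m' i0) • ω (Finsupp.single (m', j) 1) E = 0 := by
    intro m' j
    have h := hinv E (Finsupp.single (m', j) 1) E
    rw [dEb] at h
    simp only [sub_self, map_zero, neg_zero, map_zsmul, LinearMap.smul_apply] at h
    exact h
  -- key: ω E (single (m',j)) = 0
  have key : ∀ (m' : Fin n → ℤ) (j : Fin n), ω E (Finsupp.single (m', j) 1) = 0 := by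
    intro m' j
    by_cases hm : m' i0 = 0
    · -- relation (B) with x = ∂₁, y = x₁²∂₁
      have h := hinv (Finsupp.single ((fun _ => (0 : ℤ)), i0) 1)
        (Finsupp.single ((fun l => if l = i0 then (2 : ℤ) else 0), i0) 1)
        (Finsupp.single (m', j) 1)
      rw [hdia, hdia, hdia] at h
      simp only [hm, zero_smul, if_pos rfl] at h
      have h2 : (fun l => (0 : ℤ) + (if l = i0 then (2 : ℤ) else 0) - if l = i0 then 1 else 0)
          = e1 := by
        funext l; simp only [he1]; by_cases hl : l = i0 <;> simp [hl]
      rw [h2] at h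
      simp only [← hE, map_zero, LinearMap.zero_apply, sub_zero, neg_zero] at h
      -- h : ω ((2:ℤ) • E) (single (m',j)) = 0  (roughly)
      have h3 : ((2 : ℤ) • ω E) (Finsupp.single (m', j) 1) = 0 := by
        rw [← map_zsmul ω]; exact h
      simp only [LinearMap.smul_apply, smul_eq_zero] at h3
      rcases h3 with h3 | h3
      · norm_num at h3
      · exact h3
    · have h := relA m' j
      rw [smul_eq_zero] at h
      rcases h with h | h
      · exact absurd (by exact_mod_cast h) hm
      · rw [hskew, h, neg_zero]
  have main : ∀ y, ω E y = 0 := by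
    intro y
    induction y using Finsupp.induction_linear with
    | zero => simp
    | add a b ha hb => rw [map_add, ha, hb, add_zero]
    | single a b =>
      rcases a with ⟨m', j⟩
      have : Finsupp.single ((m', j) : (Fin n → ℤ) × Fin n) b
          = b • Finsupp.single (m', j) (1 : k) := by
        rw [Finsupp.smul_single, smul_eq_mul, mul_one]
      rw [this, map_smul, key, smul_zero]
  refine ⟨main, fun H => ?_⟩
  have := H E main
  exact one_ne_zero (Finsupp.single_eq_zero.mp this)
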